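/- Let 0 < ε ≤ 1/2 and σ ≥ 0. Let D and W be Borel probability measures on ℝ^d with finite second moments, means μ_D and μ_W, and suppose that for every unit vector u one has E_{X∼D}[⟨X−μ_D,u⟩²] ≤ σ² and E_{X∼W}[⟨X−μ_W,u⟩²] ≤ σ². Let Δ = μ_D − μ_W, let Σ_F be the covariance matrix of the mixture F = (1−ε)D + εW, and let v be a unit vector attaining vᵀΣ_F v = max_{‖u‖₂=1} uᵀΣ_F u. If σ² ≤ (ε/6)·‖Δ‖₂², then ⟨v,Δ⟩² ≥ (1 − 1/(6(1−ε)))·‖Δ‖₂² ≥ (2/3)·‖Δ‖₂². -/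

import Mathlib

open MeasureTheory RealInnerProductSpace

section Aux

variable {α : Type*} [MeasurableSpace α] {μ : Measure α}

/-- Product of two L² functions is integrable (polarization trick). -/
lemma aux_integrable_mul {f g : α → ℝ} (hf : MemLp f 2 μ) (hg : MemLp g 2 μ) :
    Integrable (fun x => f x * g x) μ := by
  have h1 : Integrable (fun x => (f x + g x) ^ 2) μ := by
    simpa [Pi.add_apply] using (hf.add hg).integrable_sq
  have h : Integrable (fun x => ((f x + g x) ^ 2 - f x ^ 2 - g x ^ 2) / 2) μ := by
    exact ((h1.sub hf.integrable_sq).sub hg.integrable_sq).div_const 2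
  have heq : (fun x => ((f x + g x) ^ 2 - f x ^ 2 - g x ^ 2) / 2) = fun x => f x * g x := by
    funext x; ring
  rwa [heq] at h

variable {d : ℕ}

lemma aux_memLp_inner (μ : Measure (EuclideanSpace ℝ (Fin d)))
    (h2 : MemLp (id : EuclideanSpace ℝ (Fin d) → _) 2 μ) [IsFiniteMeasure μ]
    (a u : EuclideanSpace ℝ (Fin d)) :
    MemLp (fun x : EuclideanSpace ℝ (Fin d) => ⟪x - a, u⟫) 2 μ := by
  have h1 : MemLp (fun x : EuclideanSpace ℝ (Fin d) => ⟪x, u⟫) 2 μ := by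
    simpa [Function.comp, real_inner_comm, mul_comm] using (innerSL ℝ u).comp_memLp' h2
  have := h1.sub (memLp_const (⟪a, u⟫ : ℝ))
  simpa [inner_sub_left, Pi.sub_def] using this

lemma aux_memLp_coord (μ : Measure (EuclideanSpace ℝ (Fin d)))
    (h2 : MemLp (id : EuclideanSpace ℝ (Fin d) → _) 2 μ) [IsFiniteMeasure μ]
    (i : Fin d) (c : ℝ) :
    MemLp (fun x : EuclideanSpace ℝ (Fin d) => x i - c) 2 μ := by
  have h1 : MemLp (fun x : EuclideanSpace ℝ (Fin d) => x i) 2 μ := by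
    simpa [Function.comp] using
      (EuclideanSpace.proj i : EuclideanSpace ℝ (Fin d) →L[ℝ] ℝ).comp_memLp' h2
  exact h1.sub (memLp_const c)

/-- Centered first moment vanishes. -/
lemma aux_integral_center (μ : Measure (EuclideanSpace ℝ (Fin d))) [IsProbabilityMeasure μ]
    (h2 : MemLp (id : EuclideanSpace ℝ (Fin d) → _) 2 μ)
    (m : EuclideanSpace ℝ (Fin d)) (hm : m = ∫ x, x ∂μ) (u : EuclideanSpace ℝ (Fin d)) :
    ∫ x, ⟪x - m, u⟫ ∂μ = 0 := by
  have hid : Integrable (fun x : EuclideanSpace ℝ (Fin d) => x) μ :=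
    h2.integrable one_le_two
  have hint : Integrable (fun x : EuclideanSpace ℝ (Fin d) => x - m) μ := by
    exact hid.sub (integrable_const m)
  calc ∫ x, ⟪x - m, u⟫ ∂μ = ∫ x, ⟪u, x - m⟫ ∂μ := by
        simp_rw [real_inner_comm]
    _ = ⟪u, ∫ x, (x - m) ∂μ⟫ := integral_inner (𝕜 := ℝ) hint u
    _ = 0 := by
        have : (∫ x, (x - m) ∂μ) = 0 := by
          rw [integral_sub hid (integrable_const m)]
          simp [← hm]
        rw [this, inner_zero_right]

/-- Expansion of second moment around a shifted center. -/
lemma aux_shift (μ : Measure (EuclideanSpace ℝ (Fin d))) [IsProbabilityMeasure μ]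
    (h2 : MemLp (id : EuclideanSpace ℝ (Fin d) → _) 2 μ)
    (m : EuclideanSpace ℝ (Fin d)) (hm : m = ∫ x, x ∂μ) (a u : EuclideanSpace ℝ (Fin d)) :
    ∫ x, ⟪x - a, u⟫ ^ 2 ∂μ = (∫ x, ⟪x - m, u⟫ ^ 2 ∂μ) + ⟪m - a, u⟫ ^ 2 := by
  set c : ℝ := ⟪m - a, u⟫ with hc
  have hmem := aux_memLp_inner μ h2 m u
  have hsq : Integrable (fun x => ⟪x - m, u⟫ ^ 2) μ := hmem.integrable_sq
  have hlin : Integrable (fun x : EuclideanSpace ℝ (Fin d) => ⟪x - m, u⟫) μ :=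
    hmem.integrable one_le_two
  have hpt : ∀ x : EuclideanSpace ℝ (Fin d),
      ⟪x - a, u⟫ ^ 2 = ⟪x - m, u⟫ ^ 2 + (2 * c) * ⟪x - m, u⟫ + c ^ 2 := by
    intro x
    have hx : ⟪x - a, u⟫ = ⟪x - m, u⟫ + c := by
      rw [hc, ← inner_add_left, sub_add_sub_cancel]
    rw [hx]; ring
  calc ∫ x, ⟪x - a, u⟫ ^ 2 ∂μ
      = ∫ x, (⟪x - m, u⟫ ^ 2 + (2 * c) * ⟪x - m, u⟫ + c ^ 2) ∂μ :=
        integral_congr_ae (Filter.Eventually.of_forall hpt)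
    _ = (∫ x, ⟪x - m, u⟫ ^ 2 ∂μ) + ((2 * c) * ∫ x, ⟪x - m, u⟫ ∂μ) + c ^ 2 := by
        have hadd : Integrable (fun x : EuclideanSpace ℝ (Fin d) =>
            ⟪x - m, u⟫ ^ 2 + (2 * c) * ⟪x - m, u⟫) μ := hsq.add (hlin.const_mul _)
        rw [integral_add hadd (integrable_const _), integral_add hsq (hlin.const_mul _),
          integral_const_mul, integral_const]
        simp
    _ = (∫ x, ⟪x - m, u⟫ ^ 2 ∂μ) + c ^ 2 := by
        rw [aux_integral_center μ h2 m hm u]; ring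

end Aux

/-- Final chain of inequalities in the proof of Lemma 3: if `σ² ≤ (ε/6)‖Δ‖²`, then the top
eigenvector `v` satisfies `⟨v,Δ⟩² ≥ (1 − 1/(6(1−ε)))‖Δ‖² ≥ (2/3)‖Δ‖²`. -/
theorem top_eigenvector_captures_delta {d : ℕ} (ε σ : ℝ)
    (hε0 : 0 < ε) (hε1 : ε ≤ 1 / 2) (hσ : 0 ≤ σ)
    (D W : Measure (EuclideanSpace ℝ (Fin d)))
    [IsProbabilityMeasure D] [IsProbabilityMeasure W]
    (hD2 : MemLp (id : EuclideanSpace ℝ (Fin d) → EuclideanSpace ℝ (Fin d)) 2 D)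
    (hW2 : MemLp (id : EuclideanSpace ℝ (Fin d) → EuclideanSpace ℝ (Fin d)) 2 W)
    (μD μW : EuclideanSpace ℝ (Fin d))
    (hμD : μD = (∫ x, x ∂D)) (hμW : μW = (∫ x, x ∂W))
    (hDcov : ∀ u : EuclideanSpace ℝ (Fin d), ‖u‖ = 1 →
      ∫ x, ⟪x - μD, u⟫ ^ 2 ∂D ≤ σ ^ 2)
    (hWcov : ∀ u : EuclideanSpace ℝ (Fin d), ‖u‖ = 1 →
      ∫ x, ⟪x - μW, u⟫ ^ 2 ∂W ≤ σ ^ 2)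
    (Δ : EuclideanSpace ℝ (Fin d)) (hΔ : Δ = μD - μW)
    (F : Measure (EuclideanSpace ℝ (Fin d)))
    (hF : F = ENNReal.ofReal (1 - ε) • D + ENNReal.ofReal ε • W)
    (μF : EuclideanSpace ℝ (Fin d)) (hμF : μF = (1 - ε) • μD + ε • μW)
    (SigmaF : Matrix (Fin d) (Fin d) ℝ)
    (hSigmaF : SigmaF = Matrix.of fun i j => ∫ x, (x i - μF i) * (x j - μF j) ∂F)
    (v : EuclideanSpace ℝ (Fin d)) (hv : ‖v‖ = 1)
    (hvmax : ∀ u : EuclideanSpace ℝ (Fin d), ‖u‖ = 1 →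
      ∑ i, ∑ j, u i * SigmaF i j * u j ≤ ∑ i, ∑ j, v i * SigmaF i j * v j)
    (hsep : σ ^ 2 ≤ ε / 6 * ‖Δ‖ ^ 2) :
    (1 - 1 / (6 * (1 - ε))) * ‖Δ‖ ^ 2 ≤ ⟪v, Δ⟫ ^ 2 ∧
    2 / 3 * ‖Δ‖ ^ 2 ≤ (1 - 1 / (6 * (1 - ε))) * ‖Δ‖ ^ 2 := by
  have h1ε : (0:ℝ) < 1 - ε := by linarith
  -- integrability of coordinate products under F
  have hprodF : ∀ i j : Fin d,
      Integrable (fun x : EuclideanSpace ℝ (Fin d) => (x i - μF i) * (x j - μF j)) F := by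
    intro i j
    have hD : Integrable (fun x : EuclideanSpace ℝ (Fin d) => (x i - μF i) * (x j - μF j)) D :=
      aux_integrable_mul (aux_memLp_coord D hD2 i (μF i)) (aux_memLp_coord D hD2 j (μF j))
    have hW : Integrable (fun x : EuclideanSpace ℝ (Fin d) => (x i - μF i) * (x j - μF j)) W :=
      aux_integrable_mul (aux_memLp_coord W hW2 i (μF i)) (aux_memLp_coord W hW2 j (μF j))
    rw [hF]
    exact (hD.smul_measure ENNReal.ofReal_ne_top).add_measure
      (hW.smul_measure ENNReal.ofReal_ne_top)
  -- the quadratic form equals the mixture second moment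
  have hQ : ∀ u : EuclideanSpace ℝ (Fin d),
      ∑ i, ∑ j, u i * SigmaF i j * u j = ∫ x, ⟪x - μF, u⟫ ^ 2 ∂F := by
    intro u
    have hinner : ∀ x : EuclideanSpace ℝ (Fin d),
        ⟪x - μF, u⟫ ^ 2 = ∑ i, ∑ j, u i * ((x i - μF i) * (x j - μF j)) * u j := by
      intro x
      have h1 : ⟪x - μF, u⟫ = ∑ i, (x i - μF i) * u i := by
        simp [PiLp.inner_apply, RCLike.inner_apply, mul_comm]
      rw [h1, sq, Finset.sum_mul_sum]
      apply Finset.sum_congr rfl; intro i _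
      apply Finset.sum_congr rfl; intro j _
      ring
    have hint : ∀ i j : Fin d,
        Integrable (fun x : EuclideanSpace ℝ (Fin d) =>
          u i * ((x i - μF i) * (x j - μF j)) * u j) F := by
      intro i j
      simpa [mul_assoc] using ((hprodF i j).const_mul (u i)).mul_const (u j)
    calc ∑ i, ∑ j, u i * SigmaF i j * u j
        = ∑ i, ∑ j, ∫ x, u i * ((x i - μF i) * (x j - μF j)) * u j ∂F := by
          apply Finset.sum_congr rfl; intro i _
          apply Finset.sum_congr rfl; intro j _
          rw [hSigmaF]
          simp only [Matrix.of_apply]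
          rw [← integral_const_mul, ← integral_mul_const]
      _ = ∫ x, ∑ i, ∑ j, u i * ((x i - μF i) * (x j - μF j)) * u j ∂F := by
          rw [integral_finset_sum]
          · apply Finset.sum_congr rfl; intro i _
            rw [integral_finset_sum]
            intro j _; exact hint i j
          · intro i _
            exact integrable_finset_sum _ (fun j _ => hint i j)
      _ = ∫ x, ⟪x - μF, u⟫ ^ 2 ∂F := by
          congr 1; funext x; rw [hinner x]
  -- split the mixture integral and expand
  have hQval : ∀ u : EuclideanSpace ℝ (Fin d), ‖u‖ = 1 →
      ∫ x, ⟪x - μF, u⟫ ^ 2 ∂F =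
        (1 - ε) * (∫ x, ⟪x - μD, u⟫ ^ 2 ∂D) + ε * (∫ x, ⟪x - μW, u⟫ ^ 2 ∂W)
          + ε * (1 - ε) * ⟪Δ, u⟫ ^ 2 := by
    intro u _
    have hDint : Integrable (fun x : EuclideanSpace ℝ (Fin d) => ⟪x - μF, u⟫ ^ 2) D :=
      (aux_memLp_inner D hD2 μF u).integrable_sq
    have hWint : Integrable (fun x : EuclideanSpace ℝ (Fin d) => ⟪x - μF, u⟫ ^ 2) W :=
      (aux_memLp_inner W hW2 μF u).integrable_sq
    have hsplit : ∫ x, ⟪x - μF, u⟫ ^ 2 ∂F =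
        (1 - ε) * (∫ x, ⟪x - μF, u⟫ ^ 2 ∂D) + ε * (∫ x, ⟪x - μF, u⟫ ^ 2 ∂W) := by
      rw [hF, integral_add_measure (hDint.smul_measure ENNReal.ofReal_ne_top)
        (hWint.smul_measure ENNReal.ofReal_ne_top), integral_smul_measure,
        integral_smul_measure, ENNReal.toReal_ofReal h1ε.le, ENNReal.toReal_ofReal hε0.le]
      simp [smul_eq_mul]
    have hDm : μD - μF = ε • Δ := by
      rw [hμF, hΔ]
      module
    have hWm : μW - μF = -((1 - ε) • Δ) := by
      rw [hμF, hΔ]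
      module
    have hDexp := aux_shift D hD2 μD hμD μF u
    have hWexp := aux_shift W hW2 μW hμW μF u
    rw [hsplit, hDexp, hWexp, hDm, hWm]
    rw [inner_smul_left, inner_neg_left, inner_smul_left]
    simp only [RCLike.conj_to_real, conj_trivial]
    ring
  -- nonnegativity of the variances
  have hvarD : ∀ u : EuclideanSpace ℝ (Fin d), 0 ≤ ∫ x, ⟪x - μD, u⟫ ^ 2 ∂D := by
    intro u; exact integral_nonneg (fun x => sq_nonneg _)
  have hvarW : ∀ u : EuclideanSpace ℝ (Fin d), 0 ≤ ∫ x, ⟪x - μW, u⟫ ^ 2 ∂W := by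
    intro u; exact integral_nonneg (fun x => sq_nonneg _)
  by_cases hΔ0 : Δ = 0
  · constructor
    · simp [hΔ0]
    · simp [hΔ0]
  · have hΔn : (0:ℝ) < ‖Δ‖ := norm_pos_iff.mpr hΔ0
    set u₀ : EuclideanSpace ℝ (Fin d) := ‖Δ‖⁻¹ • Δ with hu₀
    have hu₀n : ‖u₀‖ = 1 := by
      rw [hu₀, norm_smul, norm_inv, norm_norm, inv_mul_cancel₀ hΔn.ne']
    have hc₀ : ⟪Δ, u₀⟫ = ‖Δ‖ := by
      rw [hu₀, real_inner_smul_right, real_inner_self_eq_norm_mul_norm]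
      field_simp
    -- lower bound on Q u₀
    have hlow : ε * (1 - ε) * ‖Δ‖ ^ 2 ≤ ∑ i, ∑ j, u₀ i * SigmaF i j * u₀ j := by
      rw [hQ u₀, hQval u₀ hu₀n, hc₀]
      nlinarith [hvarD u₀, hvarW u₀]
    -- upper bound on Q v
    have hup : ∑ i, ∑ j, v i * SigmaF i j * v j ≤ σ ^ 2 + ε * (1 - ε) * ⟪v, Δ⟫ ^ 2 := by
      rw [hQ v, hQval v hv, real_inner_comm Δ v]
      nlinarith [hDcov v hv, hWcov v hv]
    have key : ε * (1 - ε) * ‖Δ‖ ^ 2 ≤ ε / 6 * ‖Δ‖ ^ 2 + ε * (1 - ε) * ⟪v, Δ⟫ ^ 2 := by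
      have := hvmax u₀ hu₀n
      linarith [hlow, hup, hsep]
    have hεε : (0:ℝ) < ε * (1 - ε) := mul_pos hε0 h1ε
    constructor
    · have hL : ε * (1 - ε) * ((1 - 1 / (6 * (1 - ε))) * ‖Δ‖ ^ 2)
          = ε * (1 - ε) * ‖Δ‖ ^ 2 - ε / 6 * ‖Δ‖ ^ 2 := by
        field_simp
      have h := key
      have : ε * (1 - ε) * ((1 - 1 / (6 * (1 - ε))) * ‖Δ‖ ^ 2)
          ≤ ε * (1 - ε) * ⟪v, Δ⟫ ^ 2 := by rw [hL]; linarith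
      exact le_of_mul_le_mul_left this hεε
    · have h13 : 1 / (6 * (1 - ε)) ≤ 1 / 3 := by
        rw [div_le_div_iff₀ (by linarith) (by norm_num)]
        linarith
      have h23 : (2:ℝ) / 3 ≤ 1 - 1 / (6 * (1 - ε)) := by linarith
      exact mul_le_mul_of_nonneg_right h23 (sq_nonneg _)
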